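/- Let X be a topological space whose topology is generated by a normal quasi-uniformity (i.e., there exists a quasi-uniformity 𝓤 on X which is normal and such that for every x ∈ X the sets B(x;U) = {y : (x,y) ∈ U}, U ∈ 𝓤, form a neighborhood base at x). If X is semi-Hausdorff, then X is functionally Hausdorff. -/

import Mathlib

open Topology

/-- `B(A;U)`, the `U`-neighborhood of a set `A`. -/
def setBall {X : Type*} (A : Set X) (U : Set (X × X)) : Set X :=
  {y : X | ∃ a ∈ A, (a, y) ∈ U}

/-- A quasi-uniformity on `X` is a filter on `X × X` all of whose members contain
the diagonal, such that every member `U` contains a composition `V ○ V ⊆ U` of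
some member `V` with itself. -/
def IsQuasiUniformity {X : Type*} (𝓤 : Filter (X × X)) : Prop :=
  (∀ U ∈ 𝓤, SetRel.id ⊆ U) ∧ (∀ U ∈ 𝓤, ∃ V ∈ 𝓤, SetRel.comp V V ⊆ U)

/-- A quasi-uniformity on a topological space is normal if
`closure A ⊆ interior (closure B(A;U))` for all `A` and all entourages `U`. -/
def IsNormalQuasiUniformity {X : Type*} [TopologicalSpace X]
    (𝓤 : Filter (X × X)) : Prop :=
  ∀ A : Set X, ∀ U ∈ 𝓤, closure A ⊆ interior (closure (setBall A U))

/-- A quasi-uniformity generates the topology of `X` if for every `x` the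
neighborhood filter of `x` is the filter generated by the balls
`B(x;U) = {y | (x,y) ∈ U}`, `U ∈ 𝓤`. -/
def GeneratesTopology {X : Type*} [TopologicalSpace X]
    (𝓤 : Filter (X × X)) : Prop :=
  ∀ x : X, 𝓝 x = 𝓤.lift' (fun U => {y : X | (x, y) ∈ U})

namespace NQUaux
variable {X : Type*}
lemma setBall_mono {A B : Set X} {U W : Set (X × X)} (hAB : A ⊆ B) (hUW : U ⊆ W) :
    setBall A U ⊆ setBall B W := by
  rintro z ⟨a, ha, hz⟩; exact ⟨a, hAB ha, hUW hz⟩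

lemma subset_setBall {A : Set X} {U : Set (X × X)} (h : SetRel.id ⊆ U) : A ⊆ setBall A U :=
  fun a ha => ⟨a, ha, h (SetRel.mem_id.mpr rfl)⟩

lemma setBall_setBall {A : Set X} {U W : Set (X × X)} :
    setBall (setBall A U) W ⊆ setBall A (SetRel.comp U W) := by
  rintro z ⟨b, ⟨a, ha, hab⟩, hbz⟩; exact ⟨a, ha, b, hab, hbz⟩

def Efam (x : X) (V : ℕ → Set (X × X)) : ℕ → ℕ → Set X
  | 0, k => if k = 0 then {x} else setBall {x} (V 0)
  | n+1, k => if k % 2 = 0 then Efam x V n (k / 2) else setBall (Efam x V n (k / 2)) (V (n + 1))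

variable (x : X) (V : ℕ → Set (X × X))

lemma Efam_step (hcomp : ∀ n, SetRel.comp (V (n+1)) (V (n+1)) ⊆ V n) :
    ∀ n k, k < 2^n → setBall (Efam x V n k) (V n) ⊆ Efam x V n (k+1) := by
  intro n
  induction n with
  | zero =>
    intro k hk
    interval_cases k
    simp [Efam]
  | succ n ih =>
    intro k hk
    rcases Nat.even_or_odd k with he | ho
    · have h2 : k % 2 = 0 := Nat.even_iff.mp he
      have h3 : (k+1) % 2 = 1 := by omega
      have h4 : (k+1)/2 = k/2 := by omega
      simp only [Efam, h2, h3, if_pos, if_neg, Nat.one_ne_zero, reduceIte, h4]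
      exact subset_rfl
    · have h2 : k % 2 = 1 := Nat.odd_iff.mp ho
      have h3 : (k+1) % 2 = 0 := by omega
      have h4 : (k+1)/2 = k/2 + 1 := by omega
      simp only [Efam, h2, h3, reduceIte, h4]
      calc setBall (setBall (Efam x V n (k / 2)) (V (n+1))) (V (n+1))
          ⊆ setBall (Efam x V n (k / 2)) (SetRel.comp (V (n+1)) (V (n+1))) := setBall_setBall
        _ ⊆ setBall (Efam x V n (k / 2)) (V n) := setBall_mono subset_rfl (hcomp n)
        _ ⊆ Efam x V n (k/2 + 1) := ih (k/2) (by omega)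

lemma Efam_succ_le (hid : ∀ n, SetRel.id ⊆ V n)
    (hcomp : ∀ n, SetRel.comp (V (n+1)) (V (n+1)) ⊆ V n) {n k : ℕ} (hk : k < 2^n) :
    Efam x V n k ⊆ Efam x V n (k+1) :=
  (subset_setBall (hid n)).trans (Efam_step x V hcomp n k hk)

lemma Efam_mono (hid : ∀ n, SetRel.id ⊆ V n)
    (hcomp : ∀ n, SetRel.comp (V (n+1)) (V (n+1)) ⊆ V n) {n j k : ℕ} (hjk : j ≤ k) (hk : k ≤ 2^n) :
    Efam x V n j ⊆ Efam x V n k := by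
  induction k with
  | zero => simp [Nat.le_zero.mp hjk]
  | succ k ih =>
    rcases Nat.lt_or_ge j (k+1) with h | h
    · exact (ih (by omega) (by omega)).trans (Efam_succ_le x V hid hcomp (by omega))
    · have : j = k+1 := by omega
      simp [this]

lemma Efam_double (n k : ℕ) : Efam x V (n+1) (2*k) = Efam x V n k := by
  have h2 : (2*k) % 2 = 0 := by omega
  have h4 : (2*k)/2 = k := by omega
  simp [Efam, h2, h4]

lemma Efam_pow (n p k : ℕ) : Efam x V (n+p) (k * 2^p) = Efam x V n k := by
  induction p with
  | zero => simp
  | succ p ih =>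
    have : k * 2^(p+1) = 2 * (k * 2^p) := by ring
    rw [this, show n + (p+1) = (n+p) + 1 from rfl, Efam_double, ih]

lemma Efam_top (n : ℕ) : Efam x V n (2^n) = setBall {x} (V 0) := by
  have := Efam_pow x V 0 n 1
  simp only [Nat.zero_add, one_mul] at this
  rw [this]; simp [Efam]

lemma Efam_zero (n : ℕ) : Efam x V n 0 = {x} := by
  have := Efam_pow x V 0 n 0
  simp only [Nat.zero_add, Nat.zero_mul] at this
  rw [this]; simp [Efam]

lemma Efam_cross (hid : ∀ n, SetRel.id ⊆ V n)
    (hcomp : ∀ n, SetRel.comp (V (n+1)) (V (n+1)) ⊆ V n) {m j n k : ℕ}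
    (hj : j ≤ 2^m) (hk : k ≤ 2^n) (h : j * 2^n ≤ k * 2^m) :
    Efam x V m j ⊆ Efam x V n k := by
  have h1 : Efam x V (m+n) (j * 2^n) = Efam x V m j := Efam_pow x V m n j
  have h2 : Efam x V (n+m) (k * 2^m) = Efam x V n k := Efam_pow x V n m k
  rw [← h1, ← h2, show n + m = m + n from Nat.add_comm n m]
  exact Efam_mono x V hid hcomp h
    (by calc k * 2^m ≤ 2^n * 2^m := Nat.mul_le_mul_right _ hk
      _ = 2^(m+n) := by rw [← pow_add]; ring_nf)

end NQUaux

/-- If the topology of `X` is generated by a normal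
quasi-uniformity and `X` is semi-Hausdorff, then `X` is functionally
Hausdorff. -/
theorem functionallyHausdorff_of_semiHausdorff_normally_quasiUniformizable
    {X : Type*} [TopologicalSpace X]
    (h : ∃ 𝓤 : Filter (X × X), IsQuasiUniformity 𝓤 ∧ IsNormalQuasiUniformity 𝓤 ∧
      GeneratesTopology 𝓤)
    (hsh : ∀ x y : X, x ≠ y → ∃ U ∈ 𝓝 x, y ∉ interior (closure U)) :
    ∀ x y : X, x ≠ y → ∃ f : X → ℝ, Continuous f ∧ f x ≠ f y := by
  classical
  obtain ⟨𝓤, ⟨hdiag, hco⟩, hnorm, hgen⟩ := h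
  intro x y hxy
  obtain ⟨Unb, hUnb, hyU⟩ := hsh x y hxy
  rw [hgen x] at hUnb
  have hmono : Monotone (fun U : Set (X × X) => {y : X | (x, y) ∈ U}) :=
    fun U W hUW z hz => hUW hz
  rw [Filter.mem_lift'_sets hmono] at hUnb
  obtain ⟨V₀, hV₀, hV₀U⟩ := hUnb
  -- sequence of entourages
  choose c hc1 hc2 using hco
  set Vseq : ℕ → Set (X × X) :=
    fun n => Nat.rec V₀ (fun _ W => if h : W ∈ 𝓤 then c W h else W) n with hVseq
  have hmem : ∀ n, Vseq n ∈ 𝓤 := by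
    intro n
    induction n with
    | zero => exact hV₀
    | succ n ih =>
      show (if h : Vseq n ∈ 𝓤 then c (Vseq n) h else Vseq n) ∈ 𝓤
      rw [dif_pos ih]
      exact hc1 _ ih
  have hcomp : ∀ n, SetRel.comp (Vseq (n+1)) (Vseq (n+1)) ⊆ Vseq n := by
    intro n
    have hEq : Vseq (n+1) = c (Vseq n) (hmem n) := by
      show (if h : Vseq n ∈ 𝓤 then c (Vseq n) h else Vseq n) = _
      rw [dif_pos (hmem n)]
    rw [hEq]
    exact hc2 _ _
  have hid : ∀ n, SetRel.id ⊆ Vseq n := fun n => hdiag _ (hmem n)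
  set E : ℕ → ℕ → Set X := NQUaux.Efam x Vseq with hE
  set O : ℕ → ℕ → Set X := fun n k => interior (closure (E n k)) with hO
  have hOopen : ∀ n k, IsOpen (O n k) := fun n k => isOpen_interior
  -- nesting via normality
  have hnest : ∀ n k, k < 2^n → closure (E n k) ⊆ O n (k+1) := by
    intro n k hk
    exact (hnorm (E n k) (Vseq n) (hmem n)).trans
      (interior_mono (closure_mono (NQUaux.Efam_step x Vseq hcomp n k hk)))
  have hOmono : ∀ n j k, j ≤ k → k ≤ 2^n → O n j ⊆ O n k := fun n j k hjk hk =>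
    interior_mono (closure_mono (NQUaux.Efam_mono x Vseq hid hcomp hjk hk))
  -- y is in no O n k
  have hyO : ∀ n k, k ≤ 2^n → y ∉ O n k := by
    intro n k hk hy
    apply hyU
    have h1 : E n k ⊆ Unb := by
      refine (NQUaux.Efam_mono x Vseq hid hcomp hk le_rfl).trans ?_
      rw [NQUaux.Efam_top x Vseq n]
      intro w hw
      obtain ⟨a, ha, haw⟩ := hw
      rcases ha with rfl
      exact hV₀U haw
    exact interior_mono (closure_mono h1) hy
  -- x is in every O n k with k ≥ 1
  have hxO : ∀ n k, 1 ≤ k → k ≤ 2^n → x ∈ O n k := by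
    intro n k h1 h2
    have hx0 : x ∈ closure (E n 0) := by
      apply subset_closure
      rw [show E n 0 = {x} from NQUaux.Efam_zero x Vseq n]
      exact rfl
    exact hOmono n 1 k h1 h2 (hnest n 0 (Nat.pow_pos (n := n) (by norm_num)) hx0)
  -- the function
  set Ss : X → Set ℝ :=
    fun z => insert (1:ℝ) {q | ∃ n k : ℕ, k ≤ 2^n ∧ z ∈ O n k ∧ q = (k:ℝ) / 2^n} with hSs
  have hone : ∀ z, (1:ℝ) ∈ Ss z := fun z => Set.mem_insert _ _
  have hne : ∀ z, (Ss z).Nonempty := fun z => ⟨1, hone z⟩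
  have hlb : ∀ z q, q ∈ Ss z → (0:ℝ) ≤ q := by
    intro z q hq
    rcases Set.mem_insert_iff.mp hq with rfl | ⟨n, k, _, _, rfl⟩
    · norm_num
    · positivity
  have hbdd : ∀ z, BddBelow (Ss z) := fun z => ⟨0, fun q hq => hlb z q hq⟩
  set f : X → ℝ := fun z => sInf (Ss z) with hf
  have hf1 : ∀ z, f z ≤ 1 := fun z => csInf_le (hbdd z) (hone z)
  have hf0 : ∀ z, 0 ≤ f z := fun z => le_csInf (hne z) (hlb z)
  have hfmem : ∀ z n k, k ≤ 2^n → z ∈ O n k → f z ≤ (k:ℝ) / 2^n := by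
    intro z n k hk hz
    exact csInf_le (hbdd z) (Set.mem_insert_iff.mpr (Or.inr ⟨n, k, hk, hz, rfl⟩))
  have hfx : f x = 0 := by
    refine le_antisymm ?_ (hf0 x)
    by_contra hpos
    push_neg at hpos
    obtain ⟨n, hn⟩ := pow_unbounded_of_one_lt (1 / f x) (one_lt_two (α := ℝ))
    have hp : (0:ℝ) < 2^n := by positivity
    have h1 : (1:ℝ) / 2^n < f x := by
      rw [div_lt_iff₀ hpos] at hn
      rw [div_lt_iff₀ hp]
      nlinarith
    have h2 := hfmem x n 1 (Nat.one_le_two_pow) (hxO n 1 le_rfl Nat.one_le_two_pow)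
    rw [Nat.cast_one] at h2
    exact absurd h2 (not_le.mpr h1)
  have hfy : f y = 1 := by
    refine le_antisymm (hf1 y) (le_csInf (hne y) ?_)
    intro q hq
    rcases Set.mem_insert_iff.mp hq with rfl | ⟨n, k, hk, hz, rfl⟩
    · exact le_rfl
    · exact absurd hz (hyO n k hk)
  refine ⟨f, ?_, by rw [hfx, hfy]; norm_num⟩
  rw [continuous_iff_continuousAt]
  intro z
  rw [ContinuousAt, tendsto_order]
  constructor
  · -- lower semicontinuity side
    intro a ha
    rcases lt_or_ge a 0 with ha0 | ha0
    · exact Filter.Eventually.of_forall fun w => lt_of_lt_of_le ha0 (hf0 w)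
    · have hd : 0 < f z - a := by linarith
      obtain ⟨n, hn⟩ := pow_unbounded_of_one_lt (2 / (f z - a)) (one_lt_two (α := ℝ))
      have hp : (0:ℝ) < 2^n := by positivity
      have hn' : (2:ℝ) / 2^n < f z - a := by
        rw [div_lt_iff₀ hd] at hn
        rw [div_lt_iff₀ hp]
        nlinarith
      obtain ⟨k, hk⟩ : ∃ k : ℕ, k = Nat.floor (a * 2^n) + 1 := ⟨_, rfl⟩
      have hfloor : (Nat.floor (a * 2^n) : ℝ) ≤ a * 2^n := Nat.floor_le (by positivity)
      have hkr : (k:ℝ) = (Nat.floor (a * 2^n) : ℝ) + 1 := by rw [hk]; push_cast; ring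
      have hklow : a * 2^n < (k:ℝ) := by rw [hkr]; exact Nat.lt_floor_add_one _
      have hkhigh : (k:ℝ) ≤ a * 2^n + 1 := by rw [hkr]; linarith
      have hak : a < (k:ℝ) / 2^n := by rw [lt_div_iff₀ hp]; exact hklow
      have h2 : (2:ℝ) < (f z - a) * 2^n := (div_lt_iff₀ hp).mp hn'
      have hkf : ((k:ℝ) + 1) / 2^n < f z := by
        rw [div_lt_iff₀ hp]
        nlinarith
      have hk2 : k + 1 ≤ 2^n := by
        have h1 : ((k:ℝ) + 1) / 2^n < 1 := lt_of_lt_of_le hkf (hf1 z)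
        rw [div_lt_one hp] at h1
        have : ((k + 1 : ℕ) : ℝ) < ((2^n : ℕ) : ℝ) := by push_cast; linarith
        exact_mod_cast this.le
      have hzO : z ∉ O n (k+1) := by
        intro hz
        have := hfmem z n (k+1) hk2 hz
        rw [Nat.cast_add, Nat.cast_one] at this
        exact absurd this (not_le.mpr hkf)
      have hzW : z ∉ closure (O n k) := by
        intro hz
        apply hzO
        have h1 : closure (O n k) ⊆ closure (E n k) := by
          rw [hO]
          exact (closure_mono interior_subset).trans (by rw [closure_closure])
        exact hnest n k (by omega) (h1 hz)
      refine Filter.eventually_of_mem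
        (isClosed_closure.isOpen_compl.mem_nhds hzW) ?_
      intro w hw
      have hfw : (k:ℝ) / 2^n ≤ f w := by
        refine le_csInf (hne w) ?_
        intro q hq
        rcases Set.mem_insert_iff.mp hq with rfl | ⟨m, j, hj, hwO, rfl⟩
        · rw [div_le_one hp]
          have : ((k:ℕ) : ℝ) ≤ ((2^n : ℕ) : ℝ) := by exact_mod_cast (by omega : k ≤ 2^n)
          push_cast at this
          linarith
        · by_contra hlt
          push_neg at hlt
          have hm : (0:ℝ) < 2^m := by positivity
          rw [div_lt_div_iff₀ hm hp] at hlt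
          have hnat : j * 2^n ≤ k * 2^m := by
            have : ((j * 2^n : ℕ) : ℝ) < ((k * 2^m : ℕ) : ℝ) := by push_cast; linarith
            exact_mod_cast this.le
          have hsub : O m j ⊆ O n k :=
            interior_mono (closure_mono
              (NQUaux.Efam_cross x Vseq hid hcomp hj (by omega) hnat))
          exact hw (subset_closure (hsub hwO))
      exact lt_of_lt_of_le hak hfw
  · -- upper semicontinuity side
    intro b hb
    obtain ⟨q, hq, hqb⟩ := exists_lt_of_csInf_lt (hne z) hb
    rcases Set.mem_insert_iff.mp hq with rfl | ⟨n, k, hk, hz, rfl⟩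
    · exact Filter.Eventually.of_forall fun w => lt_of_le_of_lt (hf1 w) hqb
    · refine Filter.eventually_of_mem ((hOopen n k).mem_nhds hz) ?_
      intro w hw
      exact lt_of_le_of_lt (hfmem w n k hk hw) hqb
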